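/- Fix k ∈ ℕ, N ∈ ℕ, and constants c₀, c ≥ 0. Then for every l with 1 ≤ l ≤ k, the coefficient of z^l in exp(Σ_{j'=2}^∞ (k/j') z^{j'}) is at most C^l · (k·log l / l)^{⌊l/2⌋} for a universal constant C > 0. -/

import Mathlib

open PowerSeries Finset

private lemma coeff_mul_nonneg {f g : PowerSeries ℝ} (hf : ∀ n, 0 ≤ coeff (R := ℝ) n f)
    (hg : ∀ n, 0 ≤ coeff (R := ℝ) n g) (n : ℕ) : 0 ≤ coeff (R := ℝ) n (f * g) := by
  rw [coeff_mul]
  exact Finset.sum_nonneg fun p _ => mul_nonneg (hf p.1) (hg p.2)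

private lemma coeff_pow_nonneg {f : PowerSeries ℝ} (hf : ∀ n, 0 ≤ coeff (R := ℝ) n f) (m n : ℕ) :
    0 ≤ coeff (R := ℝ) n (f ^ m) := by
  induction m generalizing n with
  | zero => simp [coeff_one]; split <;> norm_num
  | succ m ih => rw [pow_succ]; exact coeff_mul_nonneg ih hf n

private lemma sum_coeff_mul_le {f g : PowerSeries ℝ} (hf : ∀ n, 0 ≤ coeff (R := ℝ) n f)
    (hg : ∀ n, 0 ≤ coeff (R := ℝ) n g) (n : ℕ) :
    ∑ i ∈ range (n + 1), coeff (R := ℝ) i (f * g) ≤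
      (∑ i ∈ range (n + 1), coeff (R := ℝ) i f) * (∑ i ∈ range (n + 1), coeff (R := ℝ) i g) := by
  have h1 : ∑ i ∈ range (n + 1), coeff (R := ℝ) i (f * g) =
      ∑ p ∈ (range (n + 1) ×ˢ range (n + 1)).filter (fun p => p.1 + p.2 ≤ n),
        coeff (R := ℝ) p.1 f * coeff (R := ℝ) p.2 g := by
    rw [← Finset.sum_fiberwise_of_maps_to (t := range (n+1)) (g := fun p : ℕ × ℕ => p.1 + p.2)
      (fun p hp => by simp only [mem_filter] at hp; exact mem_range.2 (Nat.lt_succ_of_le hp.2))]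
    refine Finset.sum_congr rfl fun i hi => ?_
    rw [coeff_mul]
    refine Finset.sum_congr ?_ fun p _ => rfl
    ext p
    simp only [mem_filter, mem_product, mem_range, Finset.HasAntidiagonal.mem_antidiagonal]
    rw [mem_range] at hi
    omega
  rw [h1, Finset.sum_mul_sum, ← Finset.sum_product']
  exact Finset.sum_le_sum_of_subset_of_nonneg (Finset.filter_subset _ _)
    (fun p _ _ => mul_nonneg (hf p.1) (hg p.2))

private lemma sum_coeff_pow_le {f : PowerSeries ℝ} (hf : ∀ n, 0 ≤ coeff (R := ℝ) n f) (m n : ℕ) :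
    ∑ i ∈ range (n + 1), coeff (R := ℝ) i (f ^ m) ≤ (∑ i ∈ range (n + 1), coeff (R := ℝ) i f) ^ m := by
  induction m with
  | zero =>
    simp only [pow_zero, coeff_one]
    rw [Finset.sum_ite_eq' (range (n+1)) 0 (fun _ => (1:ℝ))]
    simp
  | succ m ih =>
    rw [pow_succ, pow_succ]
    calc ∑ i ∈ range (n + 1), coeff (R := ℝ) i (f ^ m * f)
        ≤ (∑ i ∈ range (n + 1), coeff (R := ℝ) i (f ^ m)) * (∑ i ∈ range (n + 1), coeff (R := ℝ) i f) :=
          sum_coeff_mul_le (coeff_pow_nonneg hf m) hf n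
      _ ≤ _ := by
          refine mul_le_mul_of_nonneg_right ih (Finset.sum_nonneg fun i _ => hf i)

private lemma coeff_pow_eq_zero {f : PowerSeries ℝ} (h0 : coeff (R := ℝ) 0 f = 0)
    (h1 : coeff (R := ℝ) 1 f = 0) (m n : ℕ) (hn : n < 2 * m) : coeff (R := ℝ) n (f ^ m) = 0 := by
  induction m generalizing n with
  | zero => omega
  | succ m ih =>
    rw [pow_succ, coeff_mul]
    refine Finset.sum_eq_zero fun p hp => ?_
    rw [Finset.HasAntidiagonal.mem_antidiagonal] at hp
    by_cases hc : p.1 < 2 * m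
    · rw [ih p.1 hc, zero_mul]
    · have : p.2 = 0 ∨ p.2 = 1 := by omega
      rcases this with h | h <;> rw [h] <;> simp [h0, h1]

private lemma pow_fact_le {x : ℝ} {m h : ℕ} (hm : m ≤ h) (hx : (h : ℝ) ≤ x) (hx0 : 0 ≤ x) :
    x ^ m * (h.factorial : ℝ) ≤ x ^ h * (m.factorial : ℝ) := by
  induction h, hm using Nat.le_induction with
  | base => exact le_rfl
  | succ h hmh ih =>
    have hh : (h : ℝ) ≤ x := le_trans (by push_cast; linarith) hx
    have := ih hh
    calc x ^ m * ((h+1).factorial : ℝ) = (x ^ m * (h.factorial : ℝ)) * (h + 1 : ℝ) := by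
          rw [Nat.factorial_succ]; push_cast; ring
      _ ≤ (x ^ h * (m.factorial : ℝ)) * (h + 1 : ℝ) := by
          refine mul_le_mul_of_nonneg_right this (by positivity)
      _ ≤ (x ^ h * (m.factorial : ℝ)) * x := by
          refine mul_le_mul_of_nonneg_left (by push_cast at hx ⊢; linarith) (by positivity)
      _ = x ^ (h+1) * (m.factorial : ℝ) := by ring

theorem exp_coeff_higher_power_sums_bound :
    ∃ C : ℝ, 0 < C ∧ ∀ k l : ℕ, 1 ≤ l → l ≤ k →
      (∑ m ∈ Finset.range (l + 1), (1 / (m.factorial : ℝ)) *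
          PowerSeries.coeff (R := ℝ) l
            ((PowerSeries.mk fun j' : ℕ =>
              if 2 ≤ j' then (k : ℝ) / j' else 0) ^ m)) ≤
        C ^ l * ((k : ℝ) * Real.log l / l) ^ (l / 2) := by
  refine ⟨24, by norm_num, fun k l hl hlk => ?_⟩
  set f : PowerSeries ℝ := PowerSeries.mk fun j' : ℕ => if 2 ≤ j' then (k : ℝ) / j' else 0 with hf
  have hfnn : ∀ n, 0 ≤ coeff (R := ℝ) n f := by
    intro n; rw [hf, coeff_mk]; split
    · positivity
    · exact le_rfl
  have hf0 : coeff (R := ℝ) 0 f = 0 := by rw [hf, coeff_mk]; norm_num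
  have hf1 : coeff (R := ℝ) 1 f = 0 := by rw [hf, coeff_mk]; norm_num
  rcases eq_or_lt_of_le hl with hl1 | hl2
  · -- case l = 1
    subst hl1
    rw [Finset.sum_range_succ, Finset.sum_range_succ, Finset.sum_range_zero]
    simp only [pow_zero, pow_one, coeff_one, hf1]
    norm_num
  · -- case 2 ≤ l
    have hl2' : (2:ℝ) ≤ (l:ℝ) := by exact_mod_cast hl2
    set hh := l / 2 with hhdef
    have hh1 : 1 ≤ hh := by omega
    have hh4 : l ≤ 4 * hh := by omega
    obtain ⟨x, hxdef⟩ : ∃ x : ℝ, x = (k:ℝ) * Real.log l := ⟨_, rfl⟩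
    have hlogl : Real.log 2 ≤ Real.log l := Real.log_le_log (by norm_num) hl2'
    have hlog2 : (0.6931471803 : ℝ) ≤ Real.log 2 := Real.log_two_gt_d9.le
    have hlog0 : (0:ℝ) < Real.log l := lt_of_lt_of_le (by norm_num) (le_trans hlog2 hlogl)
    have hk2 : (2:ℝ) ≤ (k:ℝ) := le_trans hl2' (by exact_mod_cast hlk)
    have hx0 : (0:ℝ) < x := by rw [hxdef]; exact mul_pos (by linarith) hlog0
    have hxh : (hh:ℝ) ≤ x := by
      have h2l : 2 * hh ≤ l := by omega
      have h2l' : (2:ℝ) * (hh:ℝ) ≤ (l:ℝ) := by exact_mod_cast h2l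
      have h2 : (l:ℝ) / 2 ≤ (l:ℝ) * Real.log 2 := by nlinarith
      have h3 : (l:ℝ) * Real.log 2 ≤ (k:ℝ) * Real.log l := by
        have hlk' : (l:ℝ) ≤ (k:ℝ) := by exact_mod_cast hlk
        exact mul_le_mul hlk' hlogl (by linarith) (by linarith)
      rw [hxdef]
      linarith
    -- bound on sum of coefficients of f
    obtain ⟨S, hSdef⟩ : ∃ S : ℝ, S = ∑ i ∈ range (l+1), coeff (R := ℝ) i f := ⟨_, rfl⟩
    have hS0 : 0 ≤ S := hSdef ▸ Finset.sum_nonneg fun i _ => hfnn i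
    have hSx : S ≤ x := by
      have hexp : S = (k:ℝ) * ∑ i ∈ range (l+1), (if 2 ≤ i then (1:ℝ)/i else 0) := by
        rw [hSdef, Finset.mul_sum]
        refine Finset.sum_congr rfl fun i _ => ?_
        rw [hf, coeff_mk]
        split <;> simp [div_eq_mul_inv]
      have hsum1 : ∀ n : ℕ, 1 ≤ n →
          ∑ i ∈ range (n+1), (if 2 ≤ i then (1:ℝ)/i else 0) = ((harmonic n : ℚ) : ℝ) - 1 := by
        intro n hn
        induction n, hn using Nat.le_induction with
        | base =>
          rw [Finset.sum_range_succ, Finset.sum_range_succ, Finset.sum_range_zero]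
          norm_num [harmonic]
        | succ n hn ih =>
          rw [Finset.sum_range_succ, ih, harmonic_succ]
          have h2n : 2 ≤ n + 1 := by omega
          rw [if_pos h2n]
          push_cast
          ring
      have hHlog : ((harmonic l : ℚ) : ℝ) ≤ 1 + Real.log l := harmonic_le_one_add_log l
      rw [hexp, hsum1 l hl, hxdef]
      nlinarith
    -- the term-wise bound
    have hterm : ∀ m ∈ range (l + 1), (1 / (m.factorial : ℝ)) * coeff (R := ℝ) l (f ^ m)
        ≤ x ^ hh / (hh.factorial : ℝ) := by
      intro m _
      have hrhs0 : (0:ℝ) ≤ x ^ hh / (hh.factorial : ℝ) := by positivity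
      by_cases hc : l < 2 * m
      · rw [coeff_pow_eq_zero hf0 hf1 m l hc, mul_zero]
        exact hrhs0
      · have hm2 : m ≤ hh := by omega
        have h1 : coeff (R := ℝ) l (f ^ m) ≤ S ^ m := by
          rw [hSdef]
          refine le_trans ?_ (sum_coeff_pow_le hfnn m l)
          exact Finset.single_le_sum (fun i _ => coeff_pow_nonneg hfnn m i)
            (Finset.self_mem_range_succ l)
        have h2 : S ^ m ≤ x ^ m := pow_le_pow_left₀ hS0 hSx m
        have h3 : (1 / (m.factorial : ℝ)) * coeff (R := ℝ) l (f ^ m) ≤ x ^ m / (m.factorial : ℝ) := by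
          rw [one_div, inv_mul_eq_div, div_le_div_iff₀ (by positivity) (by positivity)]
          nlinarith [h1.trans h2, (Nat.cast_pos.mpr m.factorial_pos : (0:ℝ) < m.factorial)]
        refine h3.trans ?_
        rw [div_le_div_iff₀ (by positivity) (by positivity)]
        exact pow_fact_le hm2 hxh hx0.le
    -- sum the bound
    have hsum : (∑ m ∈ Finset.range (l + 1), (1 / (m.factorial : ℝ)) * coeff (R := ℝ) l (f ^ m))
        ≤ (l + 1 : ℝ) * (x ^ hh / (hh.factorial : ℝ)) := by
      calc (∑ m ∈ Finset.range (l + 1), (1 / (m.factorial : ℝ)) * coeff (R := ℝ) l (f ^ m))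
          ≤ ∑ _m ∈ Finset.range (l + 1), x ^ hh / (hh.factorial : ℝ) :=
            Finset.sum_le_sum hterm
        _ = (l + 1 : ℝ) * (x ^ hh / (hh.factorial : ℝ)) := by
            rw [Finset.sum_const, Finset.card_range, nsmul_eq_mul]
            push_cast
            ring
    -- factorial lower bound : hh^hh / hh! ≤ 3^hh
    have hfact : ((hh:ℝ)) ^ hh ≤ 3 ^ hh * (hh.factorial : ℝ) := by
      have e1 : ((hh:ℝ)) ^ hh / (hh.factorial : ℝ) ≤ Real.exp hh := by
        refine le_trans ?_ (Real.sum_le_exp_of_nonneg (by positivity) (hh + 1))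
        exact Finset.single_le_sum (f := fun i => (hh:ℝ) ^ i / (i.factorial : ℝ))
          (fun i _ => by positivity) (Finset.self_mem_range_succ hh)
      have e2 : Real.exp hh ≤ 3 ^ hh := by
        rw [show ((hh:ℝ)) = (hh:ℕ) * (1:ℝ) by simp, Real.exp_nat_mul]
        exact pow_le_pow_left₀ (Real.exp_pos 1).le
          (le_trans Real.exp_one_lt_d9.le (by norm_num)) hh
      have hfp : (0:ℝ) < (hh.factorial : ℝ) := by positivity
      rw [div_le_iff₀ hfp] at e1
      calc ((hh:ℝ)) ^ hh ≤ Real.exp hh * (hh.factorial : ℝ) := e1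
        _ ≤ 3 ^ hh * (hh.factorial : ℝ) := mul_le_mul_of_nonneg_right e2 hfp.le
    have hinvfact : x ^ hh / (hh.factorial : ℝ) ≤ (12 * x / l) ^ hh := by
      have hhh0 : (0:ℝ) < (hh:ℝ) := by exact_mod_cast hh1
      have step1 : x ^ hh / (hh.factorial : ℝ) ≤ (3 * x / hh) ^ hh := by
        have hb : ((3 * x / hh : ℝ)) ^ hh = 3 ^ hh * x ^ hh / (hh:ℝ) ^ hh := by
          rw [div_pow, mul_pow]
        rw [hb, div_le_div_iff₀ (by positivity) (by positivity)]
        calc x ^ hh * (hh:ℝ) ^ hh ≤ x ^ hh * (3 ^ hh * (hh.factorial : ℝ)) :=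
              mul_le_mul_of_nonneg_left hfact (by positivity)
          _ = 3 ^ hh * x ^ hh * (hh.factorial : ℝ) := by ring
      refine step1.trans ?_
      refine pow_le_pow_left₀ (by positivity) ?_ hh
      rw [div_le_div_iff₀ hhh0 (by linarith)]
      have hh4' : (l:ℝ) ≤ 4 * (hh:ℝ) := by exact_mod_cast hh4
      nlinarith
    -- final assembly
    have hl2pow : (l + 1 : ℝ) ≤ 2 ^ l := by
      have h := Nat.lt_two_pow_self (n := l)
      have : l + 1 ≤ 2 ^ l := h
      exact_mod_cast this
    have h12 : ((12 * x / l : ℝ)) ^ hh = 12 ^ hh * (x / l) ^ hh := by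
      rw [← mul_pow]
      congr 1
      ring
    calc (∑ m ∈ Finset.range (l + 1), (1 / (m.factorial : ℝ)) * coeff (R := ℝ) l (f ^ m))
        ≤ (l + 1 : ℝ) * (x ^ hh / (hh.factorial : ℝ)) := hsum
      _ ≤ (2:ℝ) ^ l * (12 ^ hh * (x / l) ^ hh) := by
          rw [← h12]
          refine mul_le_mul hl2pow hinvfact (by positivity) (by positivity)
      _ ≤ (2:ℝ) ^ l * (12 ^ l * (x / l) ^ hh) := by
          refine mul_le_mul_of_nonneg_left ?_ (by positivity)
          refine mul_le_mul_of_nonneg_right ?_ (by positivity)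
          exact pow_le_pow_right₀ (by norm_num) (by omega)
      _ = 24 ^ l * (x / l) ^ hh := by
          rw [← mul_assoc, ← mul_pow]
          norm_num
      _ = 24 ^ l * ((k:ℝ) * Real.log l / l) ^ (l / 2) := by rw [hxdef, hhdef]
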